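/- Let E and F be real inner product spaces, let W ⊆ E be a finite-dimensional subspace, let v ∈ E with ‖v‖ ≤ 1, let 0 ≤ ε ≤ 1/2, and let T : E → F be a linear map that is an ε-isometry on the subspace W + span{v}. Then | ‖P_{T(W)}(T v)‖ − ‖P_W(v)‖ | ≤ 9ε, where P_W and P_{T(W)} denote the orthogonal projections onto W and onto the image subspace T(W), respectively. -/

import Mathlib

open scoped RealInnerProductSpace

set_option maxHeartbeats 1000000

/-- **Lemma 2 (Orthogonalizing the sketch), coordinate-free form.**
Let `W` be a finite-dimensional subspace of a real inner product space `E`, let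
`‖v‖ ≤ 1`, let `0 ≤ ε ≤ 1/2`, and let `T` be a linear map that is an `ε`-isometry
on `W + span{v}`. Then the norms of the orthogonal projections of `T v` onto `T(W)`
and of `v` onto `W` differ by at most `9ε`. -/
theorem sketched_projection_norm_close
    {E F : Type*} [NormedAddCommGroup E] [InnerProductSpace ℝ E]
    [NormedAddCommGroup F] [InnerProductSpace ℝ F]
    (W : Submodule ℝ E) [FiniteDimensional ℝ W]
    (v : E) (hv : ‖v‖ ≤ 1)
    (ε : ℝ) (hε0 : 0 ≤ ε) (hε1 : ε ≤ 1 / 2)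
    (T : E →ₗ[ℝ] F)
    (hT : ∀ w ∈ W ⊔ Submodule.span ℝ {v},
      (1 - ε) * ‖w‖ ≤ ‖T w‖ ∧ ‖T w‖ ≤ (1 + ε) * ‖w‖) :
    abs (‖(Submodule.orthogonalProjectionOnto (W.map T) (T v) : F)‖
      - ‖(Submodule.orthogonalProjectionOnto W v : E)‖) ≤ 9 * ε := by
  set S := W ⊔ Submodule.span ℝ {v} with hS
  have hWS : W ≤ S := le_sup_left
  have hvS : v ∈ S := Submodule.mem_sup_right (Submodule.mem_span_singleton_self v)
  -- key inner product distortion bound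
  have key : ∀ x ∈ S, ∀ y ∈ S,
      ⟪T x, T y⟫ ≤ ⟪x, y⟫ + ((2 * ε + ε ^ 2) / 2) * (‖x‖ ^ 2 + ‖y‖ ^ 2) := by
    intro x hx y hy
    have h1 := (hT (x + y) (S.add_mem hx hy)).2
    have h2 := (hT (x - y) (S.sub_mem hx hy)).1
    have hsq1 : ‖T (x + y)‖ ^ 2 ≤ ((1 + ε) * ‖x + y‖) ^ 2 :=
      pow_le_pow_left₀ (norm_nonneg _) h1 2
    have hsq2 : ((1 - ε) * ‖x - y‖) ^ 2 ≤ ‖T (x - y)‖ ^ 2 := by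
      apply pow_le_pow_left₀ _ h2 2
      have h1e : (0:ℝ) ≤ 1 - ε := by linarith
      positivity
    rw [map_add] at hsq1
    rw [map_sub] at hsq2
    have e1 := norm_add_sq_real x y
    have e2 := norm_sub_sq_real x y
    have e3 := norm_add_sq_real (T x) (T y)
    have e4 := norm_sub_sq_real (T x) (T y)
    have habs := abs_le.mp (abs_real_inner_le_norm x y)
    nlinarith [sq_nonneg (‖x‖ - ‖y‖), sq_nonneg (‖x‖ + ‖y‖), habs.1, habs.2, sq_nonneg ε]
  set p : E := (Submodule.orthogonalProjectionOnto W v : E) with hp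
  have hpW : p ∈ W := (Submodule.orthogonalProjectionOnto W v).2
  set r : E := v - p with hrdef
  have hrO : r ∈ Wᗮ := W.sub_starProjection_mem_orthogonal v
  have hpr : ⟪p, r⟫ = 0 := hrO p hpW
  have hv2 : ‖v‖ ^ 2 = ‖p‖ ^ 2 + ‖r‖ ^ 2 := by
    have hvpr : v = p + r := by rw [hrdef]; abel
    rw [hvpr, norm_add_sq_real, hpr]; ring
  have hvnn : (0:ℝ) ≤ ‖v‖ := norm_nonneg _
  have hp1 : ‖p‖ ≤ 1 := by nlinarith [norm_nonneg p, norm_nonneg r]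
  have hr1 : ‖r‖ ≤ 1 := by nlinarith [norm_nonneg p, norm_nonneg r]
  have hpS : p ∈ S := hWS hpW
  have hrS : r ∈ S := S.sub_mem hvS hpS
  haveI : FiniteDimensional ℝ (W.map T) := Module.Finite.map W T
  set z : F := (Submodule.orthogonalProjectionOnto (W.map T) (T r) : F) with hz
  have hzK : z ∈ W.map T := (Submodule.orthogonalProjectionOnto (W.map T) (T r)).2
  have hTpK : T p ∈ W.map T := Submodule.mem_map_of_mem hpW
  -- decomposition of the sketched projection
  have hq : (Submodule.orthogonalProjectionOnto (W.map T) (T v) : F) = T p + z := by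
    have hvpr : v = p + r := by rw [hrdef]; abel
    rw [hvpr, map_add, map_add (Submodule.orthogonalProjectionOnto (W.map T)), Submodule.coe_add, hz,
      Submodule.coe_orthogonalProjectionOnto_apply, Submodule.starProjection_eq_self_iff.mpr hTpK]
  -- the norm of `z` is small
  have hs2 : ⟪T r, z⟫ = ‖z‖ ^ 2 := by
    have h := Submodule.inner_orthogonalProjectionOnto_eq_of_mem_right (K := W.map T)
      (Submodule.orthogonalProjectionOnto (W.map T) (T r)) (T r)
    rw [Submodule.coe_inner] at h
    rw [hz, ← h, real_inner_self_eq_norm_sq]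
  have hzle : ‖z‖ ≤ 5 * ε := by
    rcases eq_or_ne z 0 with h0 | h0
    · rw [h0, norm_zero]; positivity
    · obtain ⟨w, hwW, hwz⟩ := Submodule.mem_map.mp hzK
      have hwne : w ≠ 0 := by rintro rfl; simp at hwz; exact h0 hwz.symm
      have hwn : (0:ℝ) < ‖w‖ := norm_pos_iff.mpr hwne
      set w' : E := ‖w‖⁻¹ • w with hw'
      have hw'W : w' ∈ W := W.smul_mem _ hwW
      have hw'n : ‖w'‖ = 1 := norm_smul_inv_norm hwne
      have hkey := key r hrS w' (hWS hw'W)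
      have hrw' : ⟪r, w'⟫ = 0 := by
        have h := hrO w' hw'W
        rwa [real_inner_comm] at h
      have hTw' : ⟪T r, T w'⟫ = ‖w‖⁻¹ * ‖z‖ ^ 2 := by
        rw [hw', map_smul, real_inner_smul_right, hwz, hs2]
      rw [hTw', hrw', hw'n] at hkey
      -- ‖w‖ ≤ 2 ‖z‖
      have hlow := (hT w (hWS hwW)).1
      rw [hwz] at hlow
      have hwle : ‖w‖ ≤ 2 * ‖z‖ := by nlinarith
      have hzpos : (0:ℝ) < ‖z‖ := norm_pos_iff.mpr h0
      have hr2 : ‖r‖ ^ 2 ≤ 1 := by nlinarith [norm_nonneg r]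
      have hc : (2 * ε + ε ^ 2) / 2 * (‖r‖ ^ 2 + 1 ^ 2) ≤ (5 / 2) * ε := by
        nlinarith [mul_nonneg hε0 (sub_nonneg.mpr hr2),
          mul_nonneg (mul_nonneg hε0 hε0) (sub_nonneg.mpr hr2),
          mul_nonneg hε0 (by linarith : (0:ℝ) ≤ 1 / 2 - ε)]
      have hmul : ‖z‖ ^ 2 ≤ ‖w‖ * ((5 / 2) * ε) := by
        calc ‖z‖ ^ 2 = ‖w‖ * (‖w‖⁻¹ * ‖z‖ ^ 2) := by field_simp
          _ ≤ ‖w‖ * (0 + (2 * ε + ε ^ 2) / 2 * (‖r‖ ^ 2 + 1 ^ 2)) :=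
              mul_le_mul_of_nonneg_left hkey hwn.le
          _ ≤ ‖w‖ * ((5 / 2) * ε) := by
              rw [zero_add]; exact mul_le_mul_of_nonneg_left hc hwn.le
      have hmul2 : ‖z‖ * ‖z‖ ≤ ‖z‖ * (5 * ε) := by nlinarith
      exact le_of_mul_le_mul_left hmul2 hzpos
  -- compare ‖T p‖ with ‖p‖
  have hTp := hT p hpS
  have h1 : |‖T p + z‖ - ‖T p‖| ≤ ‖z‖ := by
    have h := abs_norm_sub_norm_le (T p + z) (T p)
    simpa using h
  have h2 : |‖T p‖ - ‖p‖| ≤ ε * ‖p‖ := by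
    rw [abs_le]
    constructor <;> nlinarith [hTp.1, hTp.2, norm_nonneg p]
  rw [hq]
  calc |‖T p + z‖ - ‖p‖| ≤ |‖T p + z‖ - ‖T p‖| + |‖T p‖ - ‖p‖| := abs_sub_le _ _ _
    _ ≤ ‖z‖ + ε * ‖p‖ := add_le_add h1 h2
    _ ≤ 5 * ε + ε * 1 := add_le_add hzle (by nlinarith)
    _ ≤ 9 * ε := by linarith
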